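/- arXiv:2002.04506 — 2 statements merged into one kernel-verified Lean document; each statement's English description precedes it below -/
import Mathlib

section
/- Up to overall sign, there are exactly two operators of the form β = π(q₁,q₂,m) J π(q₁,q₂,m)* J⁻¹ that commute with the represented unreduced Pati-Salam algebra, commute with J, are self-adjoint and square to the identity: β = π(1₂,1₂,1₄)Jπ(1₂,1₂,1₄)J⁻¹ (the identity) and β = π(1₂,-1₂,1₄)Jπ(1₂,-1₂,1₄)J⁻¹. -/
noncomputable section
open Matrix
open scoped ComplexConjugate

abbrev M2 : Type := Matrix (Fin 2) (Fin 2) ℂ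
abbrev M3 : Type := Matrix (Fin 3) (Fin 3) ℂ
abbrev M4 : Type := Matrix (Fin 4) (Fin 4) ℂ
abbrev Idx : Type := Fin 4 × Fin 2 × Fin 4
abbrev M32 : Type := Matrix Idx Idx ℂ

/-- matrix unit `e_{ij}` -/
def eu {n : ℕ} (i j : Fin n) : Matrix (Fin n) (Fin n) ℂ := Matrix.single i j 1

/-- the element `A ⊗ E ⊗ B` of `M₄(ℂ) ⊗ M₂(ℂ) ⊗ M₄(ℂ)` realized as a matrix on `ℂ⁴ ⊗ ℂ² ⊗ ℂ⁴` -/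
def tp (A : M4) (E : M2) (B : M4) : M32 :=
  Matrix.of fun p q => A p.1 q.1 * E p.2.1 q.2.1 * B p.2.2 q.2.2

/-- a 4×4 matrix assembled from four 2×2 blocks -/
def bm (a b c d : M2) : M4 :=
  Matrix.reindex finSumFinEquiv finSumFinEquiv (Matrix.fromBlocks a b c d)

/-- block-diagonal `diag(a, b)` with 2×2 blocks -/
def diag22 (a b : M2) : M4 := bm a 0 0 b

/-- block-diagonal `diag(l, n)` with a scalar and a 3×3 block -/
def diag13 (l : ℂ) (n : M3) : M4 :=
  Matrix.reindex finSumFinEquiv finSumFinEquiv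
    (Matrix.fromBlocks (Matrix.diagonal fun _ : Fin 1 => l) 0 0 n)

/-- the standard embedding of the quaternions into `M₂(ℂ)` -/
def IsQuat (q : M2) : Prop := ∃ x y : ℂ, q = !![x, y; -(conj y), conj x]

/-- the Hilbert space `ℂ⁴ ⊗ ℂ² ⊗ ℂ⁴ ≅ M₄(ℂ) ⊕ M₄(ℂ)` -/
abbrev HSp : Type := Idx → ℂ

/-- index swap underlying the real structure `J` -/
def sw (p : Idx) : Idx := (p.2.2, if p.2.1 = 0 then 1 else 0, p.1)

/-- the antilinear real structure `J[v;w] = [w*;v*]` -/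
noncomputable def Jr (ψ : HSp) : HSp := fun p => conj (ψ (sw p))

/-- action of an operator on the Hilbert space -/
def act (X : M32) (ψ : HSp) : HSp := X.mulVec ψ

/-- conjugation `X ↦ J X J⁻¹` by the real structure, at the matrix level -/
noncomputable def Jconj (X : M32) : M32 := Matrix.of fun p q => conj (X (sw p) (sw q))

/-- the opposite-algebra element `J X* J⁻¹` -/
noncomputable def opp (X : M32) : M32 := Jconj Xᴴ

/-- representation of the (unreduced) Pati–Salam algebra `ℍ_R ⊕ ℍ_L ⊕ M₄(ℂ)` -/
def piPS (q₁ q₂ : M2) (m : M4) : M32 :=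
  tp (diag22 q₁ q₂) (eu 0 0) 1 + tp m (eu 1 1) 1

/-- representation of the reduced Pati–Salam algebra `ℍ_R ⊕ ℍ_L ⊕ ℂ ⊕ M₃(ℂ)` -/
def piRed (q₁ q₂ : M2) (l : ℂ) (n : M3) : M32 := piPS q₁ q₂ (diag13 l n)

/-- the grading γ -/
def gam : M32 := tp (diag22 1 (-1)) (eu 0 0) 1 + tp 1 (eu 1 1) (diag22 (-1) 1)

/-- the grading γ⋆ -/
def gamStar : M32 :=
  tp (diag22 1 (-1)) (eu 0 0) (diag13 1 (-1)) + tp (diag13 (-1) 1) (eu 1 1) (diag22 1 (-1))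

/-- the nontrivial β for the unreduced model -/
def betaPS : M32 := tp (diag22 1 (-1)) (eu 0 0) 1 + tp 1 (eu 1 1) (diag22 1 (-1))


lemma tp_mul (A A' : M4) (E E' : M2) (B B' : M4) :
    tp A E B * tp A' E' B' = tp (A * A') (E * E') (B * B') := by
  ext ⟨i, s, j⟩ ⟨i', s', j'⟩
  simp only [tp, Matrix.mul_apply, Matrix.of_apply, Fintype.sum_prod_type]
  rw [Finset.sum_mul_sum]
  rw [Finset.sum_mul_sum]
  apply Finset.sum_congr rfl; intro r1 _
  simp only [Finset.sum_mul]
  rw [Finset.sum_comm]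
  apply Finset.sum_congr rfl; intro r3 _
  apply Finset.sum_congr rfl; intro r2 _
  ring

lemma tp_add_left (A A' : M4) (E : M2) (B : M4) :
    tp (A + A') E B = tp A E B + tp A' E B := by
  ext ⟨i, s, j⟩ ⟨i', s', j'⟩
  simp only [tp, Matrix.of_apply, Matrix.add_apply]; ring

lemma tp_neg_left (A : M4) (E : M2) (B : M4) : tp (-A) E B = -tp A E B := by
  ext ⟨i, s, j⟩ ⟨i', s', j'⟩
  simp only [tp, Matrix.of_apply, Matrix.neg_apply]; ring

lemma tp_neg_right (A : M4) (E : M2) (B : M4) : tp A E (-B) = -tp A E B := by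
  ext ⟨i, s, j⟩ ⟨i', s', j'⟩
  simp only [tp, Matrix.of_apply, Matrix.neg_apply]; ring

lemma tp_smul_left (x : ℂ) (A : M4) (E : M2) (B : M4) : tp (x • A) E B = x • tp A E B := by
  ext ⟨i, s, j⟩ ⟨i', s', j'⟩
  simp only [tp, Matrix.of_apply, Matrix.smul_apply, smul_eq_mul]; ring

lemma tp_smul_right (x : ℂ) (A : M4) (E : M2) (B : M4) : tp A E (x • B) = x • tp A E B := by
  ext ⟨i, s, j⟩ ⟨i', s', j'⟩
  simp only [tp, Matrix.of_apply, Matrix.smul_apply, smul_eq_mul]; ring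

lemma tp_zero_left (E : M2) (B : M4) : tp 0 E B = 0 := by
  ext ⟨i, s, j⟩ ⟨i', s', j'⟩
  simp only [tp, Matrix.of_apply, Matrix.zero_apply, zero_mul]

lemma tp_zero_mid (A B : M4) : tp A 0 B = 0 := by
  ext ⟨i, s, j⟩ ⟨i', s', j'⟩
  simp only [tp, Matrix.of_apply, Matrix.zero_apply, zero_mul, mul_zero]

lemma tp_conjTranspose (A : M4) (E : M2) (B : M4) : (tp A E B)ᴴ = tp Aᴴ Eᴴ Bᴴ := by
  ext ⟨i, s, j⟩ ⟨i', s', j'⟩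
  simp only [tp, Matrix.of_apply, Matrix.conjTranspose_apply, star_mul', mul_comm, mul_assoc, mul_left_comm]

lemma E00 : eu (0 : Fin 2) 0 * eu 0 0 = eu 0 0 := by
  ext a b; fin_cases a <;> fin_cases b <;>
    simp [eu, Matrix.mul_apply, Matrix.single, Fin.sum_univ_two]

lemma E01 : eu (0 : Fin 2) 0 * eu 1 1 = 0 := by
  ext a b; fin_cases a <;> fin_cases b <;>
    simp [eu, Matrix.mul_apply, Matrix.single, Fin.sum_univ_two]

lemma E10 : eu (1 : Fin 2) 1 * eu 0 0 = 0 := by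
  ext a b; fin_cases a <;> fin_cases b <;>
    simp [eu, Matrix.mul_apply, Matrix.single, Fin.sum_univ_two]

lemma E11 : eu (1 : Fin 2) 1 * eu 1 1 = eu 1 1 := by
  ext a b; fin_cases a <;> fin_cases b <;>
    simp [eu, Matrix.mul_apply, Matrix.single, Fin.sum_univ_two]

lemma euH0 : (eu (0 : Fin 2) 0)ᴴ = eu 0 0 := by
  ext a b; fin_cases a <;> fin_cases b <;>
    simp [eu, Matrix.conjTranspose_apply, Matrix.single]

lemma euH1 : (eu (1 : Fin 2) 1)ᴴ = eu 1 1 := by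
  ext a b; fin_cases a <;> fin_cases b <;>
    simp [eu, Matrix.conjTranspose_apply, Matrix.single]

lemma one_eq_tp : (1 : M32) = tp 1 (eu 0 0) 1 + tp 1 (eu 1 1) 1 := by
  ext ⟨i, s, j⟩ ⟨i', s', j'⟩
  fin_cases s <;> fin_cases s' <;>
    simp [tp, eu, Matrix.single, Matrix.one_apply, Prod.ext_iff] <;>
    by_cases hi : i = i' <;> by_cases hj : j = j' <;> simp [hi, hj]

/-- conjugate of a matrix entrywise -/
def cmap {n : Type*} (A : Matrix n n ℂ) : Matrix n n ℂ := A.map (starRingEnd ℂ)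

lemma Jconj_add (X Y : M32) : Jconj (X + Y) = Jconj X + Jconj Y := by
  ext p q; simp [Jconj]

lemma Jconj_tp00 (A B : M4) :
    Jconj (tp A (eu 0 0) B) = tp (cmap B) (eu 1 1) (cmap A) := by
  ext ⟨i, s, j⟩ ⟨i', s', j'⟩
  fin_cases s <;> fin_cases s' <;>
    simp [Jconj, tp, sw, eu, Matrix.single, cmap, mul_comm]

lemma Jconj_tp11 (A B : M4) :
    Jconj (tp A (eu 1 1) B) = tp (cmap B) (eu 0 0) (cmap A) := by
  ext ⟨i, s, j⟩ ⟨i', s', j'⟩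
  fin_cases s <;> fin_cases s' <;>
    simp [Jconj, tp, sw, eu, Matrix.single, cmap, mul_comm]

lemma cmap_conjTranspose (A : M4) : cmap Aᴴ = Aᵀ := by
  ext i j; simp [cmap, Matrix.conjTranspose_apply]

lemma cmap_one : cmap (1 : M4) = 1 := by
  ext i j; simp [cmap, Matrix.one_apply]

lemma opp_piPS (q₁ q₂ : M2) (m : M4) :
    opp (piPS q₁ q₂ m) = tp 1 (eu 0 0) mᵀ + tp 1 (eu 1 1) (diag22 q₁ q₂)ᵀ := by
  rw [opp, piPS, Matrix.conjTranspose_add, tp_conjTranspose, tp_conjTranspose,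
    euH0, euH1, Jconj_add, Jconj_tp00, Jconj_tp11, Matrix.conjTranspose_one,
    cmap_one, cmap_conjTranspose, cmap_conjTranspose]
  rw [add_comm]

lemma beta_form (q₁ q₂ : M2) (m : M4) :
    piPS q₁ q₂ m * opp (piPS q₁ q₂ m)
      = tp (diag22 q₁ q₂) (eu 0 0) mᵀ + tp m (eu 1 1) (diag22 q₁ q₂)ᵀ := by
  rw [opp_piPS, piPS, add_mul, mul_add, mul_add, tp_mul, tp_mul, tp_mul, tp_mul,
    E00, E01, E10, E11, tp_zero_mid, tp_zero_mid, mul_one, mul_one, one_mul, one_mul]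
  abel

lemma diag22_mul (a b c d : M2) : diag22 a b * diag22 c d = diag22 (a * c) (b * d) := by
  simp only [diag22, bm, Matrix.reindex_apply, Matrix.submatrix_mul_equiv,
    Matrix.fromBlocks_multiply]
  simp

lemma diag22_one : diag22 1 1 = 1 := by
  simp only [diag22, bm, Matrix.fromBlocks_one, Matrix.reindex_apply,
    Matrix.submatrix_one_equiv]

lemma diag22_transpose (a b : M2) : (diag22 a b)ᵀ = diag22 aᵀ bᵀ := by
  simp only [diag22, bm, Matrix.reindex_apply, Matrix.transpose_submatrix,
    Matrix.fromBlocks_transpose]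
  simp

lemma diag22_conjTranspose (a b : M2) : (diag22 a b)ᴴ = diag22 aᴴ bᴴ := by
  simp only [diag22, bm, Matrix.reindex_apply, Matrix.conjTranspose_submatrix,
    Matrix.fromBlocks_conjTranspose]
  simp

lemma diag22_neg (a b : M2) : diag22 (-a) (-b) = -diag22 a b := by
  have h : Matrix.fromBlocks (-a) (0 : M2) (0 : M2) (-b) = -(Matrix.fromBlocks a 0 0 b) := by
    ext (i | i) (j | j) <;> simp
  simp only [diag22, bm, Matrix.reindex_apply, h, Matrix.submatrix_neg]
  rfl

lemma diag22_smul (x : ℂ) (a b : M2) : diag22 (x • a) (x • b) = x • diag22 a b := by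
  have h : Matrix.fromBlocks (x • a) (0 : M2) (0 : M2) (x • b)
      = x • (Matrix.fromBlocks a 0 0 b) := by
    ext (i | i) (j | j) <;> simp
  simp only [diag22, bm, Matrix.reindex_apply, h, Matrix.submatrix_smul]
  rfl

lemma cmap_diag22 (a b : M2) : cmap (diag22 a b) = diag22 (cmap a) (cmap b) := by
  have h : (Matrix.fromBlocks a (0 : M2) (0 : M2) b).map (starRingEnd ℂ)
      = Matrix.fromBlocks (a.map (starRingEnd ℂ)) 0 0 (b.map (starRingEnd ℂ)) := by
    ext (i | i) (j | j) <;> simp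
  unfold cmap diag22 bm
  rw [Matrix.reindex_apply, ← Matrix.submatrix_map, h, Matrix.reindex_apply]

lemma diag22_inj {a b c d : M2} (h : diag22 a b = diag22 c d) : a = c ∧ b = d := by
  have h2 := (Matrix.reindex finSumFinEquiv finSumFinEquiv).injective h
  constructor
  · have := congrArg Matrix.toBlocks₁₁ h2
    simpa [Matrix.toBlocks_fromBlocks₁₁] using this
  · have := congrArg Matrix.toBlocks₂₂ h2
    simpa [Matrix.toBlocks_fromBlocks₂₂] using this

lemma tp00_apply (A B : M4) (i i' j j' : Fin 4) :
    tp A (eu 0 0) B ((i, 0, j)) ((i', 0, j')) = A i i' * B j j' := by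
  simp [tp, eu, Matrix.single]

lemma tp11_apply0 (C D : M4) (i i' j j' : Fin 4) :
    tp C (eu 1 1) D ((i, 0, j)) ((i', 0, j')) = 0 := by
  simp [tp, eu, Matrix.single]

lemma tp11_apply (C D : M4) (i i' j j' : Fin 4) :
    tp C (eu 1 1) D ((i, 1, j)) ((i', 1, j')) = C i i' * D j j' := by
  simp [tp, eu, Matrix.single]

lemma tp00_apply1 (A B : M4) (i i' j j' : Fin 4) :
    tp A (eu 0 0) B ((i, 1, j)) ((i', 1, j')) = 0 := by
  simp [tp, eu, Matrix.single]

lemma TT_mul (A B C D A' B' C' D' : M4) :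
    (tp A (eu 0 0) B + tp C (eu 1 1) D) * (tp A' (eu 0 0) B' + tp C' (eu 1 1) D')
      = tp (A * A') (eu 0 0) (B * B') + tp (C * C') (eu 1 1) (D * D') := by
  rw [add_mul, mul_add, mul_add, tp_mul, tp_mul, tp_mul, tp_mul, E00, E01, E10, E11,
    tp_zero_mid, tp_zero_mid]
  abel

lemma TT_eq {A B C D A' B' C' D' : M4}
    (h : tp A (eu 0 0) B + tp C (eu 1 1) D = tp A' (eu 0 0) B' + tp C' (eu 1 1) D') :
    (∀ i i' j j', A i i' * B j j' = A' i i' * B' j j') ∧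
      (∀ i i' j j', C i i' * D j j' = C' i i' * D' j j') := by
  constructor <;> intro i i' j j'
  · have h2 := congrArg (fun X : M32 => X (i, 0, j) (i', 0, j')) h
    simpa [Matrix.add_apply, tp00_apply, tp11_apply0] using h2
  · have h2 := congrArg (fun X : M32 => X (i, 1, j) (i', 1, j')) h
    simpa [Matrix.add_apply, tp11_apply, tp00_apply1] using h2

lemma isQuat_one : IsQuat 1 := by
  refine ⟨1, 0, ?_⟩
  ext i j; fin_cases i <;> fin_cases j <;> simp [Matrix.one_apply]

lemma isQuat_neg_one : IsQuat (-1) := by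
  refine ⟨-1, 0, ?_⟩
  ext i j; fin_cases i <;> fin_cases j <;> simp [Matrix.one_apply]

lemma isQuat_sI : IsQuat !![Complex.I, 0; 0, -Complex.I] := by
  refine ⟨Complex.I, 0, ?_⟩
  ext i j; fin_cases i <;> fin_cases j <;> simp [Complex.conj_I]

lemma isQuat_J0 : IsQuat !![0, 1; -1, 0] := by
  refine ⟨0, 1, ?_⟩
  ext i j; fin_cases i <;> fin_cases j <;> simp

lemma quat_scalar {q : M2} (hq : IsQuat q)
    (h1 : q * !![Complex.I, 0; 0, -Complex.I] = !![Complex.I, 0; 0, -Complex.I] * q)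
    (h2 : q * !![0, 1; -1, 0] = !![0, 1; -1, 0] * q) :
    ∃ a : ℂ, q = a • 1 := by
  obtain ⟨x, y, rfl⟩ := hq
  have e1 := congrArg (fun M : M2 => M 0 1) h1
  simp [Matrix.mul_apply, Fin.sum_univ_two] at e1
  -- e1 should give y * I related equation
  have hy : y = 0 := by
    have h3 : y * Complex.I = 0 := by linear_combination (-1/2 : ℂ) * e1
    rcases mul_eq_zero.mp h3 with h | h
    · exact h
    · exact absurd h Complex.I_ne_zero
  subst hy
  have e2 := congrArg (fun M : M2 => M 0 1) h2
  simp [Matrix.mul_apply, Fin.sum_univ_two] at e2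
  refine ⟨x, ?_⟩
  ext i j
  fin_cases i <;> fin_cases j <;> simp [Matrix.one_apply]
  · exact e2.symm

lemma comm_all_scalar {m : M4} (hm : ∀ n : M4, m * n = n * m) : ∃ lam : ℂ, m = lam • 1 := by
  obtain ⟨lam, hl⟩ := Matrix.mem_range_scalar_of_commute_single
    (M := m) (fun i j _ => (hm _).symm)
  refine ⟨lam, ?_⟩
  rw [← hl]
  ext i j
  by_cases h : i = j <;>
    simp [Matrix.scalar_apply, Matrix.diagonal_apply, Matrix.one_apply, h]

lemma smul_one_transpose {n : Type*} [DecidableEq n] [Fintype n] (x : ℂ) :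
    (x • (1 : Matrix n n ℂ))ᵀ = x • 1 := by
  rw [Matrix.transpose_smul, Matrix.transpose_one]

/-- key properties of operators of the form `tp A e00 1 + tp 1 e11 A` -/
lemma T_props (A : M4)
    (hA1 : A * A = 1) (hAc : cmap A = A) (hAH : Aᴴ = A)
    (hAcomm : ∀ p₁ p₂ : M2, A * diag22 p₁ p₂ = diag22 p₁ p₂ * A) :
    (∀ (p₁ p₂ : M2) (n : M4),
      (tp A (eu 0 0) 1 + tp 1 (eu 1 1) A) * piPS p₁ p₂ n
        = piPS p₁ p₂ n * (tp A (eu 0 0) 1 + tp 1 (eu 1 1) A)) ∧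
    Jconj (tp A (eu 0 0) 1 + tp 1 (eu 1 1) A) = tp A (eu 0 0) 1 + tp 1 (eu 1 1) A ∧
    (tp A (eu 0 0) 1 + tp 1 (eu 1 1) A)ᴴ = tp A (eu 0 0) 1 + tp 1 (eu 1 1) A ∧
    (tp A (eu 0 0) 1 + tp 1 (eu 1 1) A) * (tp A (eu 0 0) 1 + tp 1 (eu 1 1) A) = 1 := by
  refine ⟨?_, ?_, ?_, ?_⟩
  · intro p₁ p₂ n
    rw [piPS, TT_mul, TT_mul, hAcomm]; simp only [one_mul, mul_one]
  · rw [Jconj_add, Jconj_tp00, Jconj_tp11, cmap_one, hAc, add_comm]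
  · rw [Matrix.conjTranspose_add, tp_conjTranspose, tp_conjTranspose, euH0, euH1,
      Matrix.conjTranspose_one, hAH]
  · rw [TT_mul, hA1, one_mul, ← one_eq_tp]

lemma target1 : piPS 1 1 1 * opp (piPS 1 1 1) = tp 1 (eu 0 0) 1 + tp 1 (eu 1 1) 1 := by
  rw [beta_form, diag22_one, Matrix.transpose_one]

lemma target2 : piPS 1 (-1) 1 * opp (piPS 1 (-1) 1)
    = tp (diag22 1 (-1)) (eu 0 0) 1 + tp 1 (eu 1 1) (diag22 1 (-1)) := by
  rw [beta_form, Matrix.transpose_one, diag22_transpose, Matrix.transpose_neg,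
    Matrix.transpose_one]

lemma target2' : -(piPS 1 (-1) 1 * opp (piPS 1 (-1) 1))
    = tp (diag22 (-1) 1) (eu 0 0) 1 + tp 1 (eu 1 1) (diag22 (-1) 1) := by
  rw [target2, neg_add, ← tp_neg_left, ← tp_neg_right]
  have h : -(diag22 1 (-1)) = diag22 (-1) 1 := by
    rw [← diag22_neg, neg_neg]
  rw [h]

lemma target1' : -(piPS 1 1 1 * opp (piPS 1 1 1))
    = tp (-1) (eu 0 0) 1 + tp 1 (eu 1 1) (-1) := by
  rw [target1, neg_add, ← tp_neg_left, ← tp_neg_right]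

lemma neg_one_eq : (-1 : M4) = diag22 (-1) (-1) := by
  rw [diag22_neg, diag22_one]

lemma cmap_neg' {n : Type*} (A : Matrix n n ℂ) : cmap (-A) = -cmap A := by
  ext i j; simp [cmap]

lemma cmap_one' {n : Type*} [DecidableEq n] : cmap (1 : Matrix n n ℂ) = 1 := by
  ext i j; simp [cmap, Matrix.one_apply]

lemma tp_swap_neg (E : M2) : tp 1 E (-1) = tp (-1) E 1 := by
  rw [tp_neg_right, ← tp_neg_left]

lemma target_neg1 : piPS 1 1 (-1) * opp (piPS 1 1 (-1))
    = tp (-1) (eu 0 0) 1 + tp 1 (eu 1 1) (-1) := by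
  rw [beta_form, diag22_one, Matrix.transpose_neg, Matrix.transpose_one,
    tp_swap_neg (eu 0 0), ← tp_swap_neg (eu 1 1)]

lemma target4 : piPS (-1) 1 1 * opp (piPS (-1) 1 1)
    = tp (diag22 (-1) 1) (eu 0 0) 1 + tp 1 (eu 1 1) (diag22 (-1) 1) := by
  rw [beta_form, Matrix.transpose_one, diag22_transpose, Matrix.transpose_neg,
    Matrix.transpose_one]

lemma A3_props :
    diag22 1 (-1) * diag22 1 (-1) = 1 ∧ cmap (diag22 1 (-1)) = diag22 1 (-1) ∧
      (diag22 1 (-1))ᴴ = diag22 1 (-1) ∧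
      ∀ p₁ p₂ : M2, diag22 1 (-1) * diag22 p₁ p₂ = diag22 p₁ p₂ * diag22 1 (-1) := by
  refine ⟨?_, ?_, ?_, fun p₁ p₂ => ?_⟩
  · rw [diag22_mul, one_mul, neg_one_mul, neg_neg, diag22_one]
  · rw [cmap_diag22, cmap_one', cmap_neg', cmap_one']
  · rw [diag22_conjTranspose, Matrix.conjTranspose_neg, Matrix.conjTranspose_one]
  · rw [diag22_mul, diag22_mul, one_mul, mul_one, neg_one_mul, mul_neg_one]

lemma A4_props :
    diag22 (-1) 1 * diag22 (-1) 1 = 1 ∧ cmap (diag22 (-1) 1) = diag22 (-1) 1 ∧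
      (diag22 (-1) 1)ᴴ = diag22 (-1) 1 ∧
      ∀ p₁ p₂ : M2, diag22 (-1) 1 * diag22 p₁ p₂ = diag22 p₁ p₂ * diag22 (-1) 1 := by
  refine ⟨?_, ?_, ?_, fun p₁ p₂ => ?_⟩
  · rw [diag22_mul, one_mul, neg_one_mul, neg_neg, diag22_one]
  · rw [cmap_diag22, cmap_one', cmap_neg', cmap_one']
  · rw [diag22_conjTranspose, Matrix.conjTranspose_neg, Matrix.conjTranspose_one]
  · rw [diag22_mul, diag22_mul, one_mul, mul_one, neg_one_mul, mul_neg_one]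

/-- Up to overall sign there are exactly two operators of the form
`β = π(q₁,q₂,m) J π(q₁,q₂,m)* J⁻¹` commuting with the represented unreduced
Pati–Salam algebra and with `J`, self-adjoint and squaring to `1`: namely
`π(1₂,1₂,1₄)Jπ(1₂,1₂,1₄)*J⁻¹` and `π(1₂,-1₂,1₄)Jπ(1₂,-1₂,1₄)*J⁻¹`. -/
theorem beta_unreduced_classification :
    (∀ β : M32,
      ((∃ (q₁ q₂ : M2) (m : M4), IsQuat q₁ ∧ IsQuat q₂ ∧
          β = piPS q₁ q₂ m * opp (piPS q₁ q₂ m)) ∧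
        (∀ (p₁ p₂ : M2) (n : M4), IsQuat p₁ → IsQuat p₂ →
          β * piPS p₁ p₂ n = piPS p₁ p₂ n * β) ∧
        Jconj β = β ∧ βᴴ = β ∧ β * β = 1) ↔
      (β = piPS 1 1 1 * opp (piPS 1 1 1) ∨
       β = -(piPS 1 1 1 * opp (piPS 1 1 1)) ∨
       β = piPS 1 (-1) 1 * opp (piPS 1 (-1) 1) ∨
       β = -(piPS 1 (-1) 1 * opp (piPS 1 (-1) 1)))) ∧
    piPS 1 (-1) 1 * opp (piPS 1 (-1) 1) ≠ piPS 1 1 1 * opp (piPS 1 1 1) ∧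
    piPS 1 (-1) 1 * opp (piPS 1 (-1) 1) ≠ -(piPS 1 1 1 * opp (piPS 1 1 1)) := by
  refine ⟨?_, ?_, ?_⟩
  · intro β
    constructor
    · rintro ⟨⟨q₁, q₂, m, hq₁, hq₂, hβ⟩, hcomm, hJ, hH, hsq⟩
      rw [beta_form] at hβ
      have hsqTT : tp (diag22 q₁ q₂ * diag22 q₁ q₂) (eu 0 0) (mᵀ * mᵀ)
          + tp (m * m) (eu 1 1) ((diag22 q₁ q₂)ᵀ * (diag22 q₁ q₂)ᵀ)
          = tp 1 (eu 0 0) 1 + tp 1 (eu 1 1) 1 := by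
        rw [← TT_mul, ← hβ, hsq, one_eq_tp]
      have hS1 := (TT_eq hsqTT).2
      have hDne : diag22 q₁ q₂ ≠ 0 := by
        intro h0
        have h00 := hS1 0 0 0 0
        rw [h0] at h00
        simp [Matrix.one_apply] at h00
      obtain ⟨j₀, j₀', hDjj⟩ : ∃ j j', (diag22 q₁ q₂)ᵀ j j' ≠ 0 := by
        by_contra hcon
        push_neg at hcon
        exact hDne (by ext i j; simpa using hcon j i)
      have hmn : ∀ n : M4, m * n = n * m := by
        intro n
        have h1 := hcomm 1 1 n isQuat_one isQuat_one
        rw [hβ] at h1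
        simp only [piPS] at h1
        rw [diag22_one, TT_mul, TT_mul] at h1
        simp only [mul_one, one_mul] at h1
        have hS := (TT_eq h1).2
        ext i i'
        exact mul_right_cancel₀ hDjj (hS i i' j₀ j₀')
      obtain ⟨lam, hmlam⟩ := comm_all_scalar hmn
      have hmm : m * m = (lam * lam) • 1 := by
        rw [hmlam, smul_mul_assoc, mul_smul_comm, one_mul, smul_smul]
      have hlam : lam ≠ 0 := by
        intro h0
        have h00 := hS1 0 0 0 0
        rw [hmm, h0] at h00
        simp [Matrix.one_apply] at h00
      have hm00 : mᵀ 0 0 ≠ 0 := by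
        rw [hmlam, smul_one_transpose]
        simpa [Matrix.one_apply] using hlam
      have hDcomm : ∀ σ : M2, IsQuat σ → q₁ * σ = σ * q₁ ∧ q₂ * σ = σ * q₂ := by
        intro σ hσ
        have h1 := hcomm σ σ 0 hσ hσ
        rw [hβ] at h1
        simp only [piPS] at h1
        rw [TT_mul, TT_mul] at h1
        simp only [mul_one, one_mul, mul_zero, zero_mul] at h1
        have hS := (TT_eq h1).1
        have hDP : diag22 q₁ q₂ * diag22 σ σ = diag22 σ σ * diag22 q₁ q₂ := by
          ext i i'
          exact mul_right_cancel₀ hm00 (hS i i' 0 0)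
        rw [diag22_mul, diag22_mul] at hDP
        exact diag22_inj hDP
      obtain ⟨a, ha⟩ := quat_scalar hq₁ (hDcomm _ isQuat_sI).1 (hDcomm _ isQuat_J0).1
      obtain ⟨b, hb⟩ := quat_scalar hq₂ (hDcomm _ isQuat_sI).2 (hDcomm _ isQuat_J0).2
      have hβT : β = tp (diag22 ((lam * a) • 1) ((lam * b) • 1)) (eu 0 0) 1
          + tp 1 (eu 1 1) (diag22 ((lam * a) • 1) ((lam * b) • 1)) := by
        rw [hβ, ha, hb, hmlam, smul_one_transpose, diag22_transpose, smul_one_transpose,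
          smul_one_transpose, tp_smul_right, tp_smul_left]
        rw [show ((lam * a) • (1 : M2)) = lam • (a • (1 : M2)) from (smul_smul lam a 1).symm,
          show ((lam * b) • (1 : M2)) = lam • (b • (1 : M2)) from (smul_smul lam b 1).symm,
          diag22_smul, tp_smul_left, tp_smul_right]
      have hsqT : tp (diag22 ((lam * a) • 1) ((lam * b) • 1)
            * diag22 ((lam * a) • 1) ((lam * b) • 1)) (eu 0 0) ((1 : M4) * 1)
          + tp ((1 : M4) * 1) (eu 1 1) (diag22 ((lam * a) • 1) ((lam * b) • 1)
            * diag22 ((lam * a) • 1) ((lam * b) • 1))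
          = tp 1 (eu 0 0) 1 + tp 1 (eu 1 1) 1 := by
        rw [← TT_mul, ← hβT, hsq, one_eq_tp]
      rw [one_mul] at hsqT
      have hDD : diag22 ((lam * a) • 1) ((lam * b) • 1)
          * diag22 ((lam * a) • 1) ((lam * b) • 1) = 1 := by
        ext i i'
        have h2 := (TT_eq hsqT).1 i i' 0 0
        simpa [Matrix.one_apply] using h2
      rw [diag22_mul, ← diag22_one] at hDD
      obtain ⟨hu1, hv1⟩ := diag22_inj hDD
      rw [smul_mul_assoc, mul_smul_comm, one_mul, smul_smul] at hu1 hv1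
      have hu : lam * a = 1 ∨ lam * a = -1 := by
        have h2 := congrArg (fun X : M2 => X 0 0) hu1
        simp [Matrix.one_apply] at h2
        exact mul_self_eq_one_iff.mp h2
      have hv : lam * b = 1 ∨ lam * b = -1 := by
        have h2 := congrArg (fun X : M2 => X 0 0) hv1
        simp [Matrix.one_apply] at h2
        exact mul_self_eq_one_iff.mp h2
      rcases hu with hu | hu <;> rcases hv with hv | hv
      · left
        rw [target1, hβT, hu, hv, one_smul, diag22_one]
      · right; right; left
        rw [target2, hβT, hu, hv, one_smul, neg_smul, one_smul]
      · right; right; right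
        rw [target2', hβT, hu, hv, one_smul, neg_smul, one_smul]
      · right; left
        rw [target1', hβT, hu, hv, neg_smul, one_smul, neg_one_eq]
    · intro h
      rcases h with h | h | h | h
      · have hT : β = tp 1 (eu 0 0) 1 + tp 1 (eu 1 1) 1 := by rw [h, target1]
        obtain ⟨hc, hj, hh, hs⟩ := T_props 1 (one_mul 1) cmap_one'
          Matrix.conjTranspose_one (fun p₁ p₂ => by rw [one_mul, mul_one])
        exact ⟨⟨1, 1, 1, isQuat_one, isQuat_one, h⟩,
          fun p₁ p₂ n _ _ => by rw [hT]; exact hc p₁ p₂ n,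
          by rw [hT]; exact hj, by rw [hT]; exact hh, by rw [hT]; exact hs⟩
      · have hT : β = tp (-1) (eu 0 0) 1 + tp 1 (eu 1 1) (-1) := by rw [h, target1']
        obtain ⟨hc, hj, hh, hs⟩ := T_props (-1) (by rw [neg_one_mul, neg_neg])
          (by rw [cmap_neg', cmap_one'])
          (by rw [Matrix.conjTranspose_neg, Matrix.conjTranspose_one])
          (fun p₁ p₂ => by rw [neg_one_mul, mul_neg_one])
        exact ⟨⟨1, 1, -1, isQuat_one, isQuat_one, hT.trans target_neg1.symm⟩,
          fun p₁ p₂ n _ _ => by rw [hT]; exact hc p₁ p₂ n,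
          by rw [hT]; exact hj, by rw [hT]; exact hh, by rw [hT]; exact hs⟩
      · have hT : β = tp (diag22 1 (-1)) (eu 0 0) 1 + tp 1 (eu 1 1) (diag22 1 (-1)) := by
          rw [h, target2]
        obtain ⟨h1, h2, h3, h4⟩ := A3_props
        obtain ⟨hc, hj, hh, hs⟩ := T_props _ h1 h2 h3 h4
        exact ⟨⟨1, -1, 1, isQuat_one, isQuat_neg_one, h⟩,
          fun p₁ p₂ n _ _ => by rw [hT]; exact hc p₁ p₂ n,
          by rw [hT]; exact hj, by rw [hT]; exact hh, by rw [hT]; exact hs⟩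
      · have hT : β = tp (diag22 (-1) 1) (eu 0 0) 1 + tp 1 (eu 1 1) (diag22 (-1) 1) := by
          rw [h, target2']
        obtain ⟨h1, h2, h3, h4⟩ := A4_props
        obtain ⟨hc, hj, hh, hs⟩ := T_props _ h1 h2 h3 h4
        exact ⟨⟨-1, 1, 1, isQuat_neg_one, isQuat_one, hT.trans target4.symm⟩,
          fun p₁ p₂ n _ _ => by rw [hT]; exact hc p₁ p₂ n,
          by rw [hT]; exact hj, by rw [hT]; exact hh, by rw [hT]; exact hs⟩
  · intro h
    rw [target2, target1] at h
    have hD : diag22 1 (-1) = diag22 1 1 := by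
      rw [diag22_one]
      ext i i'
      have h2 := (TT_eq h).1 i i' 0 0
      simpa [Matrix.one_apply] using h2
    have h3 := (diag22_inj hD).2
    have h4 := congrArg (fun X : M2 => X 0 0) h3
    simp [Matrix.one_apply] at h4
    norm_num at h4
  · intro h
    rw [target2, target1'] at h
    have hD : diag22 1 (-1) = diag22 (-1) (-1) := by
      rw [← neg_one_eq]
      ext i i'
      have h2 := (TT_eq h).2 0 0 i i'
      simpa [Matrix.one_apply] using h2
    have h3 := (diag22_inj hD).1
    have h4 := congrArg (fun X : M2 => X 0 0) h3
    simp [Matrix.one_apply] at h4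
    norm_num at h4
end
end

section
/- A Dirac operator D = D₀ + J D₀ J⁻¹ commutes with β = diag(1₂,-1₂) ⊗ e₁₁ ⊗ 1₄ + 1₄ ⊗ e₂₂ ⊗ diag(1₂,-1₂) if and only if D₀ = Σ_k { diag(X̃_k, Ỹ_k) ⊗ e₁₁ ⊗ Ã_k + [[P̃_k, Q̃_k],[0,0]] ⊗ e₁₂ ⊗ [[Z̃_k, 0],[T̃_k, 0]] + [[0,0],[Ũ_k, Ṽ_k]] ⊗ e₁₂ ⊗ [[0, W̃_k],[0, S̃_k]] }, with all blocks in M_2(ℂ) and Ã_k ∈ M_4(ℂ). -/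
noncomputable section
open Matrix
open scoped ComplexConjugate

def em0 : Fin 2 → Fin 4 := Fin.castAdd 2
def em1 : Fin 2 → Fin 4 := Fin.natAdd 2
def tb (i : Fin 4) : Bool := decide (i.val < 2)

lemma eu_apply {n : ℕ} (i j a b : Fin n) : eu i j a b = if i = a ∧ j = b then 1 else 0 := rfl

lemma bm00 (a b c d : M2) (i j : Fin 2) : bm a b c d (em0 i) (em0 j) = a i j := by
  show Matrix.fromBlocks a b c d (finSumFinEquiv.symm (Fin.castAdd 2 i)) (finSumFinEquiv.symm (Fin.castAdd 2 j)) = a i j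
  rw [finSumFinEquiv_symm_apply_castAdd, finSumFinEquiv_symm_apply_castAdd]; rfl
lemma bm01 (a b c d : M2) (i j : Fin 2) : bm a b c d (em0 i) (em1 j) = b i j := by
  show Matrix.fromBlocks a b c d (finSumFinEquiv.symm (Fin.castAdd 2 i)) (finSumFinEquiv.symm (Fin.natAdd 2 j)) = b i j
  rw [finSumFinEquiv_symm_apply_castAdd, finSumFinEquiv_symm_apply_natAdd]; rfl
lemma bm10 (a b c d : M2) (i j : Fin 2) : bm a b c d (em1 i) (em0 j) = c i j := by
  show Matrix.fromBlocks a b c d (finSumFinEquiv.symm (Fin.natAdd 2 i)) (finSumFinEquiv.symm (Fin.castAdd 2 j)) = c i j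
  rw [finSumFinEquiv_symm_apply_natAdd, finSumFinEquiv_symm_apply_castAdd]; rfl
lemma bm11 (a b c d : M2) (i j : Fin 2) : bm a b c d (em1 i) (em1 j) = d i j := by
  show Matrix.fromBlocks a b c d (finSumFinEquiv.symm (Fin.natAdd 2 i)) (finSumFinEquiv.symm (Fin.natAdd 2 j)) = d i j
  rw [finSumFinEquiv_symm_apply_natAdd, finSumFinEquiv_symm_apply_natAdd]; rfl

lemma idx4 : ∀ i : Fin 4, (∃ i', i = em0 i') ∨ (∃ i', i = em1 i') := by decide
lemma tb_em0 : ∀ i : Fin 2, tb (em0 i) = true := by decide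
lemma tb_em1 : ∀ i : Fin 2, tb (em1 i) = false := by decide
lemma em0_inj : ∀ i j : Fin 2, em0 i = em0 j ↔ i = j := by decide
lemma em1_inj : ∀ i j : Fin 2, em1 i = em1 j ↔ i = j := by decide
lemma em0_ne_em1 : ∀ i j : Fin 2, em0 i ≠ em1 j := by decide

def bfb (p : Idx) : Bool := if p.2.1 = 0 then tb p.1 else tb p.2.2
def bf (p : Idx) : ℂ := if bfb p then 1 else -1

lemma d1_apply (i j : Fin 4) : diag22 1 (-1) i j = if i = j then (if tb i then 1 else -1) else 0 := by
  rcases idx4 i with ⟨i', rfl⟩ | ⟨i', rfl⟩ <;> rcases idx4 j with ⟨j', rfl⟩ | ⟨j', rfl⟩ <;>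
    simp [diag22, bm00, bm01, bm10, bm11, tb_em0, tb_em1, em0_inj, em1_inj, em0_ne_em1,
      (em0_ne_em1 _ _).symm, Matrix.one_apply, Matrix.one_apply_ne, Matrix.neg_apply] <;>
  first
    | (intro h; exact em0_ne_em1 _ _ h.symm)
    | (split <;> simp)

lemma beta_diag : betaPS = Matrix.diagonal bf := by
  ext ⟨p1, p2, p3⟩ ⟨q1, q2, q3⟩
  show diag22 1 (-1) p1 q1 * eu 0 0 p2 q2 * (1 : M4) p3 q3
      + (1 : M4) p1 q1 * eu 1 1 p2 q2 * diag22 1 (-1) p3 q3 = _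
  fin_cases p2 <;> fin_cases q2 <;>
    simp [eu_apply, d1_apply, Matrix.one_apply, Matrix.diagonal_apply, bf, bfb,
      Prod.ext_iff] <;> split_ifs <;> simp_all

lemma bf_eq_iff (p q : Idx) : bf p = bf q ↔ bfb p = bfb q := by
  unfold bf
  cases hp : bfb p <;> cases hq : bfb q <;> norm_num

lemma comm_iff (M : M32) :
    M * betaPS = betaPS * M ↔ ∀ p q, bfb p ≠ bfb q → M p q = 0 := by
  rw [beta_diag]
  constructor
  · intro h p q hne
    have h1 : M p q * bf q = bf p * M p q := by
      have := congrFun (congrFun h p) q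
      rwa [Matrix.mul_diagonal, Matrix.diagonal_mul] at this
    have h2 : M p q * (bf q - bf p) = 0 := by ring_nf; linear_combination h1
    rcases mul_eq_zero.mp h2 with h3 | h3
    · exact h3
    · exact absurd ((bf_eq_iff p q).mp (sub_eq_zero.mp h3).symm) hne
  · intro h
    ext p q
    rw [Matrix.mul_diagonal, Matrix.diagonal_mul]
    by_cases hb : bfb p = bfb q
    · rw [(bf_eq_iff p q).mpr hb, mul_comm]
    · rw [h p q hb, zero_mul, mul_zero]

lemma bfb_sw (p : Idx) : bfb (sw p) = bfb p := by
  obtain ⟨p1, p2, p3⟩ := p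
  fin_cases p2 <;> simp [sw, bfb]

lemma sw_mid {p : Idx} (h : p.2.1 = 0) : (sw p).2.1 = 1 := by
  simp [sw, h]

lemma support_iff (D0 : M32) (hD0 : ∀ p q : Idx, D0 p q ≠ 0 → p.2.1 = 0) :
    ((D0 + Jconj D0) * betaPS = betaPS * (D0 + Jconj D0)) ↔
      ∀ p q, bfb p ≠ bfb q → D0 p q = 0 := by
  rw [comm_iff]
  constructor
  · intro h p q hne
    by_cases hp : p.2.1 = 0
    · have hJ : Jconj D0 p q = 0 := by
        show conj (D0 (sw p) (sw q)) = 0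
        have : D0 (sw p) (sw q) = 0 := by
          by_contra hc
          have := hD0 _ _ hc
          rw [sw_mid hp] at this
          exact one_ne_zero this
        rw [this, map_zero]
      have := h p q hne
      rw [Matrix.add_apply, hJ, add_zero] at this
      exact this
    · by_contra hc
      exact hp (hD0 _ _ hc)
  · intro h p q hne
    rw [Matrix.add_apply, h p q hne, zero_add]
    show conj (D0 (sw p) (sw q)) = 0
    rw [h (sw p) (sw q) (by rw [bfb_sw, bfb_sw]; exact hne), map_zero]

lemma diag22_off (X Y : M2) {i j : Fin 4} (h : tb i ≠ tb j) : diag22 X Y i j = 0 := by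
  rcases idx4 i with ⟨i', rfl⟩ | ⟨i', rfl⟩ <;> rcases idx4 j with ⟨j', rfl⟩ | ⟨j', rfl⟩ <;>
    simp_all [diag22, bm00, bm01, bm10, bm11, tb_em0, tb_em1]

lemma bm_rowbot (a b : M2) {i : Fin 4} (j : Fin 4) (h : tb i = false) : bm a b 0 0 i j = 0 := by
  rcases idx4 i with ⟨i', rfl⟩ | ⟨i', rfl⟩ <;> rcases idx4 j with ⟨j', rfl⟩ | ⟨j', rfl⟩ <;>
    simp_all [bm00, bm01, bm10, bm11, tb_em0, tb_em1]

lemma bm_rowtop (c d : M2) {i : Fin 4} (j : Fin 4) (h : tb i = true) : bm 0 0 c d i j = 0 := by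
  rcases idx4 i with ⟨i', rfl⟩ | ⟨i', rfl⟩ <;> rcases idx4 j with ⟨j', rfl⟩ | ⟨j', rfl⟩ <;>
    simp_all [bm00, bm01, bm10, bm11, tb_em0, tb_em1]

lemma bm_colright (a c : M2) (i : Fin 4) {j : Fin 4} (h : tb j = false) : bm a 0 c 0 i j = 0 := by
  rcases idx4 i with ⟨i', rfl⟩ | ⟨i', rfl⟩ <;> rcases idx4 j with ⟨j', rfl⟩ | ⟨j', rfl⟩ <;>
    simp_all [bm00, bm01, bm10, bm11, tb_em0, tb_em1]

lemma bm_colleft (b d : M2) (i : Fin 4) {j : Fin 4} (h : tb j = true) : bm 0 b 0 d i j = 0 := by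
  rcases idx4 i with ⟨i', rfl⟩ | ⟨i', rfl⟩ <;> rcases idx4 j with ⟨j', rfl⟩ | ⟨j', rfl⟩ <;>
    simp_all [bm00, bm01, bm10, bm11, tb_em0, tb_em1]

lemma sum_form_support {n : ℕ} (X Y P Q Z T U V W S : Fin n → M2) (A : Fin n → M4) :
    ∀ p q : Idx, bfb p ≠ bfb q →
      (∑ k : Fin n,
        (tp (diag22 (X k) (Y k)) (eu 0 0) (A k) +
         tp (bm (P k) (Q k) 0 0) (eu 0 1) (bm (Z k) 0 (T k) 0) +
         tp (bm 0 0 (U k) (V k)) (eu 0 1) (bm 0 (W k) 0 (S k)))) p q = 0 := by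
  rintro ⟨p1, p2, p3⟩ ⟨q1, q2, q3⟩ hne
  rw [Matrix.sum_apply]
  apply Finset.sum_eq_zero
  intro k _
  simp only [Matrix.add_apply]
  fin_cases p2 <;> fin_cases q2 <;>
    simp only [bfb, Fin.mk_zero, Fin.mk_one] at hne <;>
    simp only [tp, Matrix.of_apply, eu_apply] <;> norm_num
  · -- p2 = 0, q2 = 0 : tb p1 ≠ tb q1
    exact Or.inl (diag22_off _ _ (by simpa using hne))
  · -- p2 = 0, q2 = 1 : tb p1 ≠ tb q3
    have hne' : tb p1 ≠ tb q3 := by simpa using hne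
    cases htb : tb p1 with
    | true =>
      rw [bm_colright _ _ _ (by cases hq : tb q3 <;> simp_all), bm_rowtop _ _ _ htb]
      ring
    | false =>
      rw [bm_rowbot _ _ _ htb, bm_colleft _ _ _ (by cases hq : tb q3 <;> simp_all)]
      ring

def blk (f g : Fin 2 → Fin 4) (M : M4) : M2 := Matrix.of fun i j => M (f i) (g j)

def cM1 (a b : Fin 4) : M4 := if tb a = tb b then eu a b else 0
def cM2 (a b : Fin 4) : M4 := if tb a then eu a b else 0
def cM3 (a b : Fin 4) : M4 := if tb a then 0 else eu a b
def cA (D0 : M32) (a b : Fin 4) : M4 := Matrix.of fun c d => D0 (a, 0, c) (b, 0, d)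
def cB2 (D0 : M32) (a b : Fin 4) : M4 :=
  Matrix.of fun c d => if tb d then D0 (a, 0, c) (b, 1, d) else 0
def cB3 (D0 : M32) (a b : Fin 4) : M4 :=
  Matrix.of fun c d => if tb d then 0 else D0 (a, 0, c) (b, 1, d)

lemma bm_blocks (M : M4) :
    bm (blk em0 em0 M) (blk em0 em1 M) (blk em1 em0 M) (blk em1 em1 M) = M := by
  ext i j
  rcases idx4 i with ⟨i', rfl⟩ | ⟨i', rfl⟩ <;> rcases idx4 j with ⟨j', rfl⟩ | ⟨j', rfl⟩ <;>
    simp [bm00, bm01, bm10, bm11, blk]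

lemma hM1 (a b : Fin 4) :
    diag22 (blk em0 em0 (cM1 a b)) (blk em1 em1 (cM1 a b)) = cM1 a b := by
  have h1 : blk em0 em1 (cM1 a b) = 0 := by
    ext i j
    simp only [blk, cM1, Matrix.of_apply]
    split
    · next h =>
      rw [eu_apply]
      split
      · next h2 => rw [h2.1, h2.2, tb_em0, tb_em1] at h; exact absurd h (by simp)
      · rfl
    · rfl
  have h2 : blk em1 em0 (cM1 a b) = 0 := by
    ext i j
    simp only [blk, cM1, Matrix.of_apply]
    split
    · next h =>
      rw [eu_apply]
      split
      · next h2 => rw [h2.1, h2.2, tb_em0, tb_em1] at h; exact absurd h (by simp)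
      · rfl
    · rfl
  rw [diag22]; conv_rhs => rw [← bm_blocks (cM1 a b), h1, h2]

lemma hM2 (a b : Fin 4) :
    bm (blk em0 em0 (cM2 a b)) (blk em0 em1 (cM2 a b)) 0 0 = cM2 a b := by
  have h1 : blk em1 em0 (cM2 a b) = 0 := by
    ext i j
    simp only [blk, cM2, Matrix.of_apply]
    split
    · next h =>
      rw [eu_apply]
      split
      · next h2 => rw [h2.1, tb_em1] at h; exact absurd h (by simp)
      · rfl
    · rfl
  have h2 : blk em1 em1 (cM2 a b) = 0 := by
    ext i j
    simp only [blk, cM2, Matrix.of_apply]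
    split
    · next h =>
      rw [eu_apply]
      split
      · next h2 => rw [h2.1, tb_em1] at h; exact absurd h (by simp)
      · rfl
    · rfl
  conv_rhs => rw [← bm_blocks (cM2 a b), h1, h2]

lemma hM3 (a b : Fin 4) :
    bm 0 0 (blk em1 em0 (cM3 a b)) (blk em1 em1 (cM3 a b)) = cM3 a b := by
  have h1 : blk em0 em0 (cM3 a b) = 0 := by
    ext i j
    simp only [blk, cM3, Matrix.of_apply]
    split
    · rfl
    · next h =>
      rw [eu_apply]
      split
      · next h2 => rw [h2.1, tb_em0] at h; exact absurd rfl h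
      · rfl
  have h2 : blk em0 em1 (cM3 a b) = 0 := by
    ext i j
    simp only [blk, cM3, Matrix.of_apply]
    split
    · rfl
    · next h =>
      rw [eu_apply]
      split
      · next h2 => rw [h2.1, tb_em0] at h; exact absurd rfl h
      · rfl
  conv_rhs => rw [← bm_blocks (cM3 a b), h1, h2]

lemma hB2 (D0 : M32) (a b : Fin 4) :
    bm (blk em0 em0 (cB2 D0 a b)) 0 (blk em1 em0 (cB2 D0 a b)) 0 = cB2 D0 a b := by
  have h1 : blk em0 em1 (cB2 D0 a b) = 0 := by
    ext i j; simp [blk, cB2, tb_em1]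
  have h2 : blk em1 em1 (cB2 D0 a b) = 0 := by
    ext i j; simp [blk, cB2, tb_em1]
  conv_rhs => rw [← bm_blocks (cB2 D0 a b), h1, h2]

lemma hB3 (D0 : M32) (a b : Fin 4) :
    bm 0 (blk em0 em1 (cB3 D0 a b)) 0 (blk em1 em1 (cB3 D0 a b)) = cB3 D0 a b := by
  have h1 : blk em0 em0 (cB3 D0 a b) = 0 := by
    ext i j; simp [blk, cB3, tb_em0]
  have h2 : blk em1 em0 (cB3 D0 a b) = 0 := by
    ext i j; simp [blk, cB3, tb_em0]
  conv_rhs => rw [← bm_blocks (cB3 D0 a b), h1, h2]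

lemma decomp (D0 : M32) (hD0 : ∀ p q : Idx, D0 p q ≠ 0 → p.2.1 = 0)
    (hS : ∀ p q, bfb p ≠ bfb q → D0 p q = 0) :
    D0 = ∑ ab : Fin 4 × Fin 4,
      (tp (cM1 ab.1 ab.2) (eu 0 0) (cA D0 ab.1 ab.2) +
       tp (cM2 ab.1 ab.2) (eu 0 1) (cB2 D0 ab.1 ab.2) +
       tp (cM3 ab.1 ab.2) (eu 0 1) (cB3 D0 ab.1 ab.2)) := by
  ext ⟨p1, p2, p3⟩ ⟨q1, q2, q3⟩
  rw [Matrix.sum_apply]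
  have hp2 : p2 = 0 ∨ p2 = 1 := by omega
  have hq2 : q2 = 0 ∨ q2 = 1 := by omega
  rcases hp2 with rfl | rfl
  · rcases hq2 with rfl | rfl
    · -- p2 = 0, q2 = 0
      have key : ∀ ab : Fin 4 × Fin 4,
          (tp (cM1 ab.1 ab.2) (eu 0 0) (cA D0 ab.1 ab.2) +
           tp (cM2 ab.1 ab.2) (eu 0 1) (cB2 D0 ab.1 ab.2) +
           tp (cM3 ab.1 ab.2) (eu 0 1) (cB3 D0 ab.1 ab.2)) (p1, 0, p3) (q1, 0, q3) =
          if ab = (p1, q1) then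
            (if tb p1 = tb q1 then D0 (p1, 0, p3) (q1, 0, q3) else 0) else 0 := by
        rintro ⟨a, b⟩
        simp only [Matrix.add_apply, tp, Matrix.of_apply, eu_apply, cM1, cM2, cM3, cA, cB2, cB3]
        norm_num
        by_cases h1 : (a, b) = (p1, q1)
        · rw [Prod.mk.injEq] at h1
          obtain ⟨rfl, rfl⟩ := h1
          by_cases h3 : tb a = tb b <;> simp [h3, eu_apply]
        · have h2 : ¬(a = p1 ∧ b = q1) := by
            rw [Prod.mk.injEq] at h1; tauto
          simp [apply_ite (fun M : M4 => M p1 q1), eu_apply, h2]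
      rw [Finset.sum_congr rfl (fun ab _ => key ab), Finset.sum_ite_eq' Finset.univ (p1, q1)]
      simp only [Finset.mem_univ, if_pos]
      by_cases h : tb p1 = tb q1
      · rw [if_pos h]
      · rw [if_neg h, hS (p1, 0, p3) (q1, 0, q3) (by simpa [bfb] using h)]
    · -- p2 = 0, q2 = 1
      have key : ∀ ab : Fin 4 × Fin 4,
          (tp (cM1 ab.1 ab.2) (eu 0 0) (cA D0 ab.1 ab.2) +
           tp (cM2 ab.1 ab.2) (eu 0 1) (cB2 D0 ab.1 ab.2) +
           tp (cM3 ab.1 ab.2) (eu 0 1) (cB3 D0 ab.1 ab.2)) (p1, 0, p3) (q1, 1, q3) =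
          if ab = (p1, q1) then
            (if tb p1 = tb q3 then D0 (p1, 0, p3) (q1, 1, q3) else 0) else 0 := by
        rintro ⟨a, b⟩
        simp only [Matrix.add_apply, tp, Matrix.of_apply, eu_apply, cM1, cM2, cM3, cA, cB2, cB3]
        norm_num
        by_cases h1 : (a, b) = (p1, q1)
        · rw [Prod.mk.injEq] at h1
          obtain ⟨rfl, rfl⟩ := h1
          cases hta : tb a <;> cases htq : tb q3 <;> simp [hta, htq, eu_apply]
        · have h2 : ¬(a = p1 ∧ b = q1) := by
            rw [Prod.mk.injEq] at h1; tauto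
          simp [apply_ite (fun M : M4 => M p1 q1), eu_apply, h2]
      rw [Finset.sum_congr rfl (fun ab _ => key ab), Finset.sum_ite_eq' Finset.univ (p1, q1)]
      simp only [Finset.mem_univ, if_pos]
      by_cases h : tb p1 = tb q3
      · rw [if_pos h]
      · rw [if_neg h, hS (p1, 0, p3) (q1, 1, q3) (by simpa [bfb] using h)]
  · -- p2 = 1
    have hz : D0 (p1, 1, p3) (q1, q2, q3) = 0 := by
      by_contra hc
      simpa using hD0 _ _ hc
    rw [hz]
    symm
    apply Finset.sum_eq_zero
    rintro ⟨a, b⟩ -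
    simp [tp, eu_apply]

def pe : Fin 16 ≃ Fin 4 × Fin 4 := (finProdFinEquiv (m := 4) (n := 4)).symm


/-- A Dirac operator `D = D₀ + J D₀ J⁻¹` commutes with
`β = diag(1₂,-1₂) ⊗ e₁₁ ⊗ 1₄ + 1₄ ⊗ e₂₂ ⊗ diag(1₂,-1₂)` iff `D₀` has the stated
block form. -/
theorem commute_beta_iff (D0 : M32)
    (hD0 : ∀ p q : Idx, D0 p q ≠ 0 → p.2.1 = 0) :
    (D0 + Jconj D0) * betaPS = betaPS * (D0 + Jconj D0) ↔
    ∃ (n : ℕ) (X Y P Q Z T U V W S : Fin n → M2) (A : Fin n → M4),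
      D0 = ∑ k : Fin n,
        (tp (diag22 (X k) (Y k)) (eu 0 0) (A k) +
         tp (bm (P k) (Q k) 0 0) (eu 0 1) (bm (Z k) 0 (T k) 0) +
         tp (bm 0 0 (U k) (V k)) (eu 0 1) (bm 0 (W k) 0 (S k))) := by
  rw [support_iff D0 hD0]
  constructor
  · intro hS
    refine ⟨16,
      fun k => blk em0 em0 (cM1 (pe k).1 (pe k).2),
      fun k => blk em1 em1 (cM1 (pe k).1 (pe k).2),
      fun k => blk em0 em0 (cM2 (pe k).1 (pe k).2),
      fun k => blk em0 em1 (cM2 (pe k).1 (pe k).2),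
      fun k => blk em0 em0 (cB2 D0 (pe k).1 (pe k).2),
      fun k => blk em1 em0 (cB2 D0 (pe k).1 (pe k).2),
      fun k => blk em1 em0 (cM3 (pe k).1 (pe k).2),
      fun k => blk em1 em1 (cM3 (pe k).1 (pe k).2),
      fun k => blk em0 em1 (cB3 D0 (pe k).1 (pe k).2),
      fun k => blk em1 em1 (cB3 D0 (pe k).1 (pe k).2),
      fun k => cA D0 (pe k).1 (pe k).2, ?_⟩
    conv_lhs => rw [decomp D0 hD0 hS]
    exact (Fintype.sum_equiv pe _ _
      (fun k => by rw [hM1, hM2, hM3, hB2, hB3])).symm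
  · rintro ⟨n, X, Y, P, Q, Z, T, U, V, W, S, A, rfl⟩ p q hne
    exact sum_form_support X Y P Q Z T U V W S A p q hne
end
end
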